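/- In the root system of type C_n (n ≥ 2), there exists a maximal set of pairwise strongly orthogonal roots θ_1, ..., θ_ℓ for which the center of the centralizer of the corresponding sl_2-subalgebras in sp(n) has dimension strictly less than ℓ. -/

import Mathlib

open Matrix

attribute [local instance 100] LieRing.ofAssociativeRing

noncomputable section

/-- The roots of the root system `C_n`: `±e_i ± e_j` (`i ≠ j`) and `±2e_i`,
encoded as integer vectors. -/
def CnRoots (n : ℕ) : Set (Fin n → ℤ) :=
  {v | (∃ i j : Fin n, i ≠ j ∧
          (v = Pi.single i 1 - Pi.single j 1 ∨ v = Pi.single i 1 + Pi.single j 1 ∨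
           v = -(Pi.single i 1 + Pi.single j 1))) ∨
       (∃ i : Fin n, v = 2 • Pi.single i 1 ∨ v = -(2 • Pi.single i 1))}

/-- Strong orthogonality of roots: `α ± β` is never a root (and `α ≠ ±β`). -/
def CnStrongOrth (n : ℕ) (α β : Fin n → ℤ) : Prop :=
  α ≠ β ∧ α ≠ -β ∧ (α + β) ∉ CnRoots n ∧ (α - β) ∉ CnRoots n

/-- The standard symplectic structure matrix. -/
def Jmat (n : ℕ) : Matrix (Fin n ⊕ Fin n) (Fin n ⊕ Fin n) ℂ :=
  fromBlocks 0 1 (-1) 0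

/-- The compact symplectic Lie algebra `sp(n) = su(2n) ∩ sp(2n, ℂ)`. -/
def spCompact (n : ℕ) : Set (Matrix (Fin n ⊕ Fin n) (Fin n ⊕ Fin n) ℂ) :=
  {A | Aᴴ = -A ∧ Aᵀ * Jmat n = -(Jmat n * A)}

/-- The Cartan element `H_d = diag(d, -d)` of `sp(2n, ℂ)`. -/
def CnCartan (n : ℕ) (d : Fin n → ℂ) : Matrix (Fin n ⊕ Fin n) (Fin n ⊕ Fin n) ℂ :=
  fromBlocks (diagonal d) 0 0 (-diagonal d)

/-- The root space `g_α ⊆ sp(2n, ℂ)` of a root `α` of `C_n`. -/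
def CnRootSpace (n : ℕ) (α : Fin n → ℤ) :
    Set (Matrix (Fin n ⊕ Fin n) (Fin n ⊕ Fin n) ℂ) :=
  {A | (Aᵀ * Jmat n = -(Jmat n * A)) ∧
       ∀ d : Fin n → ℂ, ⁅CnCartan n d, A⁆ = (∑ i, (α i : ℂ) * d i) • A}

/-- The `sp(1)`-subalgebra `s(θ)` of the compact real form generated by the root
spaces of `±θ`. -/
def CnS (n : ℕ) (θ : Fin n → ℤ) : Set (Matrix (Fin n ⊕ Fin n) (Fin n ⊕ Fin n) ℂ) :=
  {A | A ∈ spCompact n ∧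
       A ∈ (LieSubalgebra.lieSpan ℂ (Matrix (Fin n ⊕ Fin n) (Fin n ⊕ Fin n) ℂ)
              (CnRootSpace n θ ∪ CnRootSpace n (-θ)) : Set _)}

/-- The centralizer in `sp(n)` of the subalgebras `s(θ_1), …, s(θ_ℓ)`. -/
def CnCentralizer (n ℓ : ℕ) (θ : Fin ℓ → Fin n → ℤ) :
    Set (Matrix (Fin n ⊕ Fin n) (Fin n ⊕ Fin n) ℂ) :=
  {A | A ∈ spCompact n ∧ ∀ k : Fin ℓ, ∀ B ∈ CnS n (θ k), A * B = B * A}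

/-- The center of the centralizer. -/
def CnCenterCentralizer (n ℓ : ℕ) (θ : Fin ℓ → Fin n → ℤ) :
    Set (Matrix (Fin n ⊕ Fin n) (Fin n ⊕ Fin n) ℂ) :=
  {A | A ∈ CnCentralizer n ℓ θ ∧ ∀ B ∈ CnCentralizer n ℓ θ, A * B = B * A}


def Dm (n : ℕ) (i : Fin n) : Matrix (Fin n) (Fin n) ℂ := Matrix.single i i 1

lemma Dm_transpose (n : ℕ) (i : Fin n) : (Dm n i)ᵀ = Dm n i := by
  ext a b; simp [Dm, Matrix.single, transpose_apply, and_comm]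

lemma Dm_conjTranspose (n : ℕ) (i : Fin n) : (Dm n i)ᴴ = Dm n i := by
  ext a b; simp [Dm, Matrix.single, conjTranspose_apply, and_comm, apply_ite]

lemma diagonal_mul_Dm (n : ℕ) (i : Fin n) (d : Fin n → ℂ) :
    diagonal d * Dm n i = d i • Dm n i := by
  ext a b
  rw [Matrix.diagonal_mul]
  by_cases h : i = a <;> simp [Dm, Matrix.single, h, eq_comm]

lemma Dm_mul_diagonal (n : ℕ) (i : Fin n) (d : Fin n → ℂ) :
    Dm n i * diagonal d = d i • Dm n i := by
  ext a b
  rw [Matrix.mul_diagonal]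
  by_cases h : i = b <;> simp [Dm, Matrix.single, h, eq_comm]

lemma sum_Dm (n : ℕ) : ∑ i, Dm n i = 1 := by
  ext a b
  simp only [Matrix.sum_apply, Dm, Matrix.single, of_apply, one_apply]
  by_cases h : a = b
  · subst h; simp
  · rw [if_neg h, Finset.sum_eq_zero]
    intro x _
    rw [if_neg]
    rintro ⟨rfl, rfl⟩; exact h rfl

def Em (n : ℕ) (i : Fin n) : Matrix (Fin n ⊕ Fin n) (Fin n ⊕ Fin n) ℂ :=
  fromBlocks 0 (Dm n i) 0 0

def Fm (n : ℕ) (i : Fin n) : Matrix (Fin n ⊕ Fin n) (Fin n ⊕ Fin n) ℂ :=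
  fromBlocks 0 0 (Dm n i) 0

lemma coeff_sum (n : ℕ) (i : Fin n) (d : Fin n → ℂ) :
    (∑ j, (((2 • Pi.single i 1 : Fin n → ℤ) j : ℂ)) * d j) = 2 * d i := by
  rw [Finset.sum_eq_single i]
  · simp [Pi.single_apply]
  · intro b _ hb; simp [Pi.single_apply, hb.symm]
  · simp

lemma Em_mem (n : ℕ) (i : Fin n) : Em n i ∈ CnRootSpace n (2 • Pi.single i 1) := by
  constructor
  · simp only [Em, Jmat, fromBlocks_transpose, fromBlocks_multiply, Dm_transpose,
      Matrix.mul_zero, Matrix.zero_mul, Matrix.mul_one, Matrix.mul_neg, Matrix.one_mul,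
      add_zero, zero_add, transpose_zero, fromBlocks_neg, neg_zero, neg_neg, neg_mul, one_mul]
  · intro d
    rw [Ring.lie_def]
    simp only [Em, CnCartan, fromBlocks_multiply, Matrix.mul_zero, Matrix.zero_mul,
      add_zero, zero_add, Matrix.neg_mul, Matrix.mul_neg, diagonal_mul_Dm, Dm_mul_diagonal,
      coeff_sum]
    rw [show ((2:ℂ) * d i) • fromBlocks (0:Matrix (Fin n) (Fin n) ℂ) (Dm n i) 0 0
        = fromBlocks 0 ((2 * d i) • Dm n i) 0 0 by rw [fromBlocks_smul]; simp]
    rw [sub_eq_iff_eq_add, fromBlocks_add]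
    congr 1 <;> simp [two_mul, add_smul]

lemma Fm_mem (n : ℕ) (i : Fin n) : Fm n i ∈ CnRootSpace n (-(2 • Pi.single i 1)) := by
  constructor
  · simp only [Fm, Jmat, fromBlocks_transpose, fromBlocks_multiply, Dm_transpose,
      Matrix.mul_zero, Matrix.zero_mul, Matrix.mul_one, Matrix.mul_neg, Matrix.one_mul,
      add_zero, zero_add, transpose_zero, fromBlocks_neg, neg_zero, neg_neg]
  · intro d
    rw [Ring.lie_def]
    have : (∑ j, (((-(2 • Pi.single i 1) : Fin n → ℤ) j : ℂ)) * d j) = -(2 * d i) := by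
      rw [← neg_eq_iff_eq_neg, ← Finset.sum_neg_distrib]
      rw [← coeff_sum n i d]
      congr 1; funext j; push_cast [Pi.neg_apply]; ring
    rw [this]
    simp only [Fm, CnCartan, fromBlocks_multiply, Matrix.mul_zero, Matrix.zero_mul,
      add_zero, zero_add, Matrix.neg_mul, Matrix.mul_neg, diagonal_mul_Dm, Dm_mul_diagonal]
    rw [show (-(2 * d i)) • fromBlocks (0:Matrix (Fin n) (Fin n) ℂ) 0 (Dm n i) 0
        = fromBlocks 0 0 ((-(2 * d i)) • Dm n i) 0 by rw [fromBlocks_smul]; simp]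
    rw [sub_eq_iff_eq_add, fromBlocks_add]
    congr 1 <;> simp [two_mul, add_smul] <;> abel

lemma Em_conjTranspose (n : ℕ) (i : Fin n) : (Em n i)ᴴ = Fm n i := by
  simp [Em, Fm, fromBlocks_conjTranspose, Dm_conjTranspose]

lemma Fm_conjTranspose (n : ℕ) (i : Fin n) : (Fm n i)ᴴ = Em n i := by
  simp [Em, Fm, fromBlocks_conjTranspose, Dm_conjTranspose]

lemma sub_mem_CnS (n : ℕ) (i : Fin n) : Em n i - Fm n i ∈ CnS n (2 • Pi.single i 1) := by
  refine ⟨⟨?_, ?_⟩, ?_⟩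
  · rw [conjTranspose_sub, Em_conjTranspose, Fm_conjTranspose]; abel
  · have h1 := (Em_mem n i).1
    have h2 := (Fm_mem n i).1
    rw [transpose_sub, Matrix.sub_mul, h1, h2, Matrix.mul_sub]
    abel
  · exact sub_mem
      (LieSubalgebra.subset_lieSpan (Set.mem_union_left _ (Em_mem n i)))
      (LieSubalgebra.subset_lieSpan (Set.mem_union_right _ (Fm_mem n i)))

lemma smul_add_mem_CnS (n : ℕ) (i : Fin n) :
    Complex.I • (Em n i + Fm n i) ∈ CnS n (2 • Pi.single i 1) := by
  refine ⟨⟨?_, ?_⟩, ?_⟩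
  · rw [conjTranspose_smul, conjTranspose_add, Em_conjTranspose, Fm_conjTranspose]
    simp [Complex.conj_I, add_comm]
  · have h1 := (Em_mem n i).1
    have h2 := (Fm_mem n i).1
    rw [transpose_smul, Matrix.smul_mul, transpose_add, Matrix.add_mul, h1, h2,
      Matrix.mul_smul, Matrix.mul_add]
    rw [← neg_add, smul_neg]
  · exact (LieSubalgebra.lieSpan ℂ _ _).smul_mem _ (add_mem
      (LieSubalgebra.subset_lieSpan (Set.mem_union_left _ (Em_mem n i)))
      (LieSubalgebra.subset_lieSpan (Set.mem_union_right _ (Fm_mem n i))))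

lemma centralizer_zero (n : ℕ) :
    ∀ A ∈ CnCentralizer n n (fun k => 2 • Pi.single k 1), A = 0 := by
  rintro A ⟨⟨-, hJ⟩, hc⟩
  -- commutation with Em and Fm
  have hEF : ∀ i, A * (Em n i + Fm n i) = (Em n i + Fm n i) * A := by
    intro i
    have h2 := hc i _ (smul_add_mem_CnS n i)
    rw [mul_smul_comm, smul_mul_assoc] at h2
    exact smul_right_injective _ Complex.I_ne_zero h2
  have hE : ∀ i, A * Em n i = Em n i * A := by
    intro i
    have h1 := hc i _ (sub_mem_CnS n i)
    have h3 : A * ((Em n i - Fm n i) + (Em n i + Fm n i))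
        = ((Em n i - Fm n i) + (Em n i + Fm n i)) * A := by
      rw [Matrix.mul_add, Matrix.add_mul, h1, hEF]
    have hsum : (Em n i - Fm n i) + (Em n i + Fm n i) = (2 : ℂ) • Em n i := by
      rw [two_smul]; abel
    rw [hsum, mul_smul_comm, smul_mul_assoc] at h3
    exact smul_right_injective _ two_ne_zero h3
  have hF : ∀ i, A * Fm n i = Fm n i * A := by
    intro i
    have h1 := hc i _ (sub_mem_CnS n i)
    have h3 : A * ((Em n i + Fm n i) - (Em n i - Fm n i))
        = ((Em n i + Fm n i) - (Em n i - Fm n i)) * A := by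
      rw [Matrix.mul_sub, Matrix.sub_mul, h1, hEF]
    have hsum : (Em n i + Fm n i) - (Em n i - Fm n i) = (2 : ℂ) • Fm n i := by
      rw [two_smul]; abel
    rw [hsum, mul_smul_comm, smul_mul_assoc] at h3
    exact smul_right_injective _ two_ne_zero h3
  -- block decomposition
  set W := A.toBlocks₁₁ with hW
  set X := A.toBlocks₁₂ with hX
  set Y := A.toBlocks₂₁ with hY
  set Z := A.toBlocks₂₂ with hZ
  have hA : A = fromBlocks W X Y Z := (fromBlocks_toBlocks A).symm
  have hEeq : ∀ i, fromBlocks 0 (W * Dm n i) 0 (Y * Dm n i)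
      = fromBlocks (Dm n i * Y) (Dm n i * Z) 0 0 := by
    intro i
    have := hE i
    rw [hA, Em, fromBlocks_multiply, fromBlocks_multiply] at this
    simpa using this
  have hFeq : ∀ i, fromBlocks (X * Dm n i) 0 (Z * Dm n i) 0
      = fromBlocks 0 0 (Dm n i * W) (Dm n i * X) := by
    intro i
    have := hF i
    rw [hA, Fm, fromBlocks_multiply, fromBlocks_multiply] at this
    simpa using this
  have hYD : ∀ i, Y * Dm n i = 0 := fun i => ((fromBlocks_inj.mp (hEeq i)).2.2.2).trans rfl
  have hXD : ∀ i, X * Dm n i = 0 := fun i => (fromBlocks_inj.mp (hFeq i)).1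
  have hWD : ∀ i, W * Dm n i = Dm n i * Z := fun i => (fromBlocks_inj.mp (hEeq i)).2.1
  have hY0 : Y = 0 := by
    calc Y = Y * 1 := (Matrix.mul_one Y).symm
    _ = ∑ i, Y * Dm n i := by rw [← Finset.mul_sum, sum_Dm]
    _ = 0 := by simp [hYD]
  have hX0 : X = 0 := by
    calc X = X * 1 := (Matrix.mul_one X).symm
    _ = ∑ i, X * Dm n i := by rw [← Finset.mul_sum, sum_Dm]
    _ = 0 := by simp [hXD]
  -- symplectic condition gives Wᵀ = -Z
  have hZW : Z = -Wᵀ := by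
    rw [hA, hX0, hY0] at hJ
    rw [Jmat, fromBlocks_transpose, fromBlocks_multiply, fromBlocks_multiply] at hJ
    simp only [transpose_zero, Matrix.mul_zero, Matrix.zero_mul, Matrix.mul_one,
      Matrix.one_mul, Matrix.mul_neg, Matrix.neg_mul, add_zero, zero_add,
      fromBlocks_neg, neg_zero, neg_neg] at hJ
    have h12 := (fromBlocks_inj.mp hJ).2.1
    rw [← neg_eq_iff_eq_neg, ← h12]
  have hW0 : W = 0 := by
    ext a b
    have h := congrFun (congrFun (hWD b) a) b
    rw [hZW, Matrix.mul_neg] at h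
    by_cases hab : a = b
    · subst hab
      rw [show (W * Dm n a) a a = W a a by
            simpa [Dm] using Matrix.mul_single_apply_same (1:ℂ) a a a W,
          show (-(Dm n a * Wᵀ)) a a = -(W a a) by
            simp only [Matrix.neg_apply, neg_inj, Dm]
            rw [Matrix.single_mul_apply_same (1:ℂ) a a a Wᵀ,
              Matrix.transpose_apply, one_mul]] at h
      have h2 : W a a = 0 := by linear_combination h / 2
      simp [h2]
    · rw [show (W * Dm n b) a b = W a b by
            simpa [Dm] using Matrix.mul_single_apply_same (1:ℂ) b b a W,
          show (-(Dm n b * Wᵀ)) a b = 0 by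
            simp only [Matrix.neg_apply, neg_eq_zero, Dm]
            exact Matrix.single_mul_apply_of_ne 1 b b a b hab Wᵀ] at h
      simp [h]
  have hZ0 : Z = 0 := by rw [hZW, hW0]; simp
  rw [hA, hW0, hX0, hY0, hZ0, fromBlocks_zero]

lemma not_root_add (n : ℕ) (k k' : Fin n) (hkk' : k ≠ k') :
    ((2 • Pi.single k 1 : Fin n → ℤ) + 2 • Pi.single k' 1) ∉ CnRoots n := by
  rintro (⟨i, j, hij, (h | h | h)⟩ | ⟨i, (h | h)⟩) <;>
    [skip; skip; skip;
     (have h1 := congrFun h k; have h2 := congrFun h k';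
      simp [Pi.single_apply] at h1 h2; split_ifs at h1 h2 <;> omega);
     (have h1 := congrFun h k; have h2 := congrFun h k';
      simp [Pi.single_apply] at h1 h2; split_ifs at h1 h2 <;> omega)] <;>
  · have h1 := congrFun h i
    simp [Pi.single_apply] at h1
    split_ifs at h1 <;> omega

lemma not_root_sub (n : ℕ) (k k' : Fin n) (hkk' : k ≠ k') :
    ((2 • Pi.single k 1 : Fin n → ℤ) - 2 • Pi.single k' 1) ∉ CnRoots n := by
  rintro (⟨i, j, hij, (h | h | h)⟩ | ⟨i, (h | h)⟩) <;>
    [skip; skip; skip;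
     (have h1 := congrFun h k; have h2 := congrFun h k';
      simp [Pi.single_apply] at h1 h2; split_ifs at h1 h2 <;> omega);
     (have h1 := congrFun h k; have h2 := congrFun h k';
      simp [Pi.single_apply] at h1 h2; split_ifs at h1 h2 <;> omega)] <;>
  · have h1 := congrFun h i
    simp [Pi.single_apply] at h1
    split_ifs at h1 <;> omega

lemma single_ne (n : ℕ) (k k' : Fin n) (hkk' : k ≠ k') :
    (2 • Pi.single k 1 : Fin n → ℤ) ≠ 2 • Pi.single k' 1 := by
  intro h
  have h1 := congrFun h k
  simp [Pi.single_apply, hkk'] at h1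

lemma single_ne_neg (n : ℕ) (k k' : Fin n) (hkk' : k ≠ k') :
    (2 • Pi.single k 1 : Fin n → ℤ) ≠ -(2 • Pi.single k' 1) := by
  intro h
  have h1 := congrFun h k
  simp [Pi.single_apply, hkk'] at h1

theorem stmt_10 (n : ℕ) (hn : 2 ≤ n) :
    ∃ (ℓ : ℕ) (θ : Fin ℓ → Fin n → ℤ),
      (∀ k, θ k ∈ CnRoots n) ∧
      (∀ k k', k ≠ k' → CnStrongOrth n (θ k) (θ k')) ∧
      -- maximality: no further root is strongly orthogonal to all the θ_k
      (∀ β ∈ CnRoots n, ¬ ∀ k, CnStrongOrth n β (θ k)) ∧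
      Module.finrank ℝ (Submodule.span ℝ (CnCenterCentralizer n ℓ θ)) < ℓ := by
  refine ⟨n, fun k => 2 • Pi.single k 1, fun k => Or.inr ⟨k, Or.inl rfl⟩, ?_, ?_, ?_⟩
  · intro k k' hkk'
    exact ⟨single_ne n k k' hkk', single_ne_neg n k k' hkk',
      not_root_add n k k' hkk', not_root_sub n k k' hkk'⟩
  · rintro β (⟨i, j, hij, (rfl | rfl | rfl)⟩ | ⟨i, (rfl | rfl)⟩) hall
    · refine (hall j).2.2.1 (Or.inl ⟨i, j, hij, Or.inr (Or.inl ?_)⟩)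
      funext x
      simp [Pi.single_apply]
      split_ifs <;> ring
    · refine (hall j).2.2.2 (Or.inl ⟨i, j, hij, Or.inl ?_⟩)
      funext x
      simp [Pi.single_apply]
      split_ifs <;> ring
    · refine (hall j).2.2.1 (Or.inl ⟨j, i, hij.symm, Or.inl ?_⟩)
      funext x
      simp [Pi.single_apply]
      split_ifs <;> ring
    · exact (hall i).1 rfl
    · exact (hall i).2.1 rfl
  · have hspan : Submodule.span ℝ
        (CnCenterCentralizer n n (fun k => 2 • Pi.single k 1)) = ⊥ := by
      rw [Submodule.span_eq_bot]
      intro x hx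
      exact centralizer_zero n x hx.1
    rw [hspan, finrank_bot]
    omega

end
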